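/- (McDiarmid's bounded-difference inequality) Let X₁,...,X_m be independent random variables taking values in a set S, and let F: Sᵐ → ℝ satisfy |F(x) − F(x̂)| ≤ c_k whenever x and x̂ differ only in the k-th coordinate. Then for Y = F(X₁,...,X_m) and every t ≥ 0, Pr[|Y − E[Y]| ≥ t] ≤ 2 exp(−2t² / Σ_{k=1}^m c_k²). -/

import Mathlib

open MeasureTheory

open Real

-- denominator positivity
lemma den_pos {p : ℝ} (hp0 : 0 ≤ p) (hp1 : p ≤ 1) (h : ℝ) :
    0 < 1 - p + p * Real.exp h := by
  rcases eq_or_lt_of_le hp1 with h1 | h1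
  · simp [← h1]; positivity
  · have : 0 < 1 - p := by linarith
    nlinarith [Real.exp_pos h, mul_nonneg hp0 (Real.exp_pos h).le]

noncomputable def phi (p h : ℝ) : ℝ := -p*h + Real.log (1 - p + p * Real.exp h)
noncomputable def Dphi (p h : ℝ) : ℝ := -p + p * Real.exp h / (1 - p + p * Real.exp h)

lemma hasDerivAt_phi {p : ℝ} (hp0 : 0 ≤ p) (hp1 : p ≤ 1) (h : ℝ) :
    HasDerivAt (phi p) (Dphi p h) h := by
  have hd : HasDerivAt (fun h => 1 - p + p * Real.exp h) (p * Real.exp h) h := by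
    simpa using ((Real.hasDerivAt_exp h).const_mul p).const_add (1 - p)
  have := ((hd.log (den_pos hp0 hp1 h).ne')).const_add 0
  have h2 : HasDerivAt (fun h : ℝ => -p*h) (-p) h := by
    simpa using (hasDerivAt_id h).const_mul (-p)
  have := h2.add (hd.log (den_pos hp0 hp1 h).ne')
  unfold phi Dphi
  convert this using 2 <;> rfl

lemma hasDerivAt_Dphi {p : ℝ} (hp0 : 0 ≤ p) (hp1 : p ≤ 1) (h : ℝ) :
    HasDerivAt (Dphi p) (p * Real.exp h * (1 - p) / (1 - p + p * Real.exp h)^2) h := by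
  have hd : HasDerivAt (fun h => 1 - p + p * Real.exp h) (p * Real.exp h) h := by
    simpa using ((Real.hasDerivAt_exp h).const_mul p).const_add (1 - p)
  have hn : HasDerivAt (fun h => p * Real.exp h) (p * Real.exp h) h :=
    (Real.hasDerivAt_exp h).const_mul p
  have := (hn.div hd (den_pos hp0 hp1 h).ne').const_add (-p)
  convert this using 1
  · rfl
  · rfl
  · rfl
  have hden := (den_pos hp0 hp1 h).ne'
  ring

lemma Dphi_bound {p : ℝ} (hp0 : 0 ≤ p) (hp1 : p ≤ 1) (h : ℝ) :
    |Dphi p h| ≤ |h| / 4 := by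
  have key : ∀ x : ℝ, ‖p * Real.exp x * (1 - p) / (1 - p + p * Real.exp x)^2‖ ≤ 1/4 := by
    intro x
    have hpos := den_pos hp0 hp1 x
    have hxy : p * Real.exp x * (1 - p) ≤ (1 - p + p * Real.exp x)^2 / 4 := by
      nlinarith [sq_nonneg (1 - p - p * Real.exp x)]
    have h1p : 0 ≤ 1 - p := by linarith
    rw [Real.norm_eq_abs, abs_of_nonneg (by positivity)]
    rw [div_le_iff₀ (by positivity)]
    linarith
  have := Convex.norm_image_sub_le_of_norm_hasDerivWithin_le
    (f := Dphi p) (f' := fun x => p * Real.exp x * (1 - p) / (1 - p + p * Real.exp x)^2)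
    (fun x _ => (hasDerivAt_Dphi hp0 hp1 x).hasDerivWithinAt) (fun x _ => key x)
    convex_univ (Set.mem_univ 0) (Set.mem_univ h)
  have h0 : Dphi p 0 = 0 := by simp [Dphi]
  rw [h0, sub_zero, sub_zero, Real.norm_eq_abs, Real.norm_eq_abs] at this
  linarith

lemma phi_le {p : ℝ} (hp0 : 0 ≤ p) (hp1 : p ≤ 1) (h : ℝ) :
    phi p h ≤ h^2 / 8 := by
  set g : ℝ → ℝ := fun h => h^2/8 - phi p h with hg
  have hg' : ∀ x, HasDerivAt g (x/4 - Dphi p x) x := by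
    intro x
    have h1 : HasDerivAt (fun h : ℝ => h^2/8) (x/4) x := by
      have := (hasDerivAt_pow 2 x).div_const 8
      convert this using 1
      · rfl
      · rfl
      push_cast; ring
    exact h1.sub (hasDerivAt_phi hp0 hp1 x)
  have hg0 : g 0 = 0 := by simp [hg, phi]
  have hcont : Continuous g := by
    have : Differentiable ℝ g := fun x => (hg' x).differentiableAt
    exact this.continuous
  rcases le_or_gt 0 h with hh | hh
  · have hm : MonotoneOn g (Set.Ici 0) := by
      apply monotoneOn_of_deriv_nonneg (convex_Ici 0) hcont.continuousOn
      · intro x hx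
        exact ((hg' x).differentiableAt).differentiableWithinAt
      · intro x hx
        rw [(hg' x).deriv]
        have := Dphi_bound hp0 hp1 x
        have hx' : 0 < x := by simpa using hx
        have := abs_le.1 (Dphi_bound hp0 hp1 x)
        rw [abs_of_pos hx'] at this
        linarith [this.2]
    have := hm (Set.mem_Ici.2 le_rfl) (Set.mem_Ici.2 hh) hh
    rw [hg0] at this
    simp only [hg] at this
    linarith
  · have hm : AntitoneOn g (Set.Iic 0) := by
      apply antitoneOn_of_deriv_nonpos (convex_Iic 0) hcont.continuousOn
      · intro x hx
        exact ((hg' x).differentiableAt).differentiableWithinAt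
      · intro x hx
        rw [(hg' x).deriv]
        have hx' : x < 0 := by simpa using hx
        have := abs_le.1 (Dphi_bound hp0 hp1 x)
        rw [abs_of_neg hx'] at this
        linarith [this.1]
    have := hm (Set.mem_Iic.2 hh.le) (Set.mem_Iic.2 le_rfl) hh.le
    rw [hg0] at this
    simp only [hg] at this
    linarith

lemma integrable_of_bdd {α : Type*} [MeasurableSpace α] {ν : Measure α}
    [IsFiniteMeasure ν] {f : α → ℝ} (hf : Measurable f) {C : ℝ}
    (hC : ∀ x, |f x| ≤ C) : Integrable f ν :=
  (integrable_const C).mono' hf.aestronglyMeasurable (Filter.Eventually.of_forall hC)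

lemma hoeffding_lemma {α : Type*} [MeasurableSpace α] (ν : Measure α)
    [IsProbabilityMeasure ν] (f : α → ℝ) (hf : Measurable f) (a b : ℝ)
    (hab : ∀ x, f x ∈ Set.Icc a b) (l : ℝ) :
    ∫ x, Real.exp (l * (f x - ∫ y, f y ∂ν)) ∂ν ≤ Real.exp (l^2 * (b-a)^2 / 8) := by
  have hne : Nonempty α := by
    by_contra h
    have : ν Set.univ = 0 := by
      rw [Set.univ_eq_empty_iff.2 (not_nonempty_iff.1 h)]; simp
    simp [measure_univ] at this
  obtain ⟨x₀⟩ := hne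
  have hab' : a ≤ b := le_trans (hab x₀).1 (hab x₀).2
  have hfint : Integrable f ν := integrable_of_bdd hf
    (fun x => abs_le.2 ⟨le_trans (neg_le_neg (le_max_left (-a) b)) (by simpa using (hab x).1),
      le_trans (hab x).2 (le_max_right (-a) b)⟩)
  set M := ∫ y, f y ∂ν with hM
  have hMa : a ≤ M := by
    have := integral_mono (integrable_const a) hfint (fun x => (hab x).1)
    simpa using this
  have hMb : M ≤ b := by
    have := integral_mono hfint (integrable_const b) (fun x => (hab x).2)
    simpa using this
  rcases eq_or_lt_of_le hab' with heq | hlt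
  · -- a = b, f constant
    have hfx : ∀ x, f x = a := fun x => le_antisymm (heq ▸ (hab x).2) (hab x).1
    have : M = a := by
      rw [hM]
      simp only [hfx]
      simp
    simp only [hfx, this, sub_self, mul_zero, Real.exp_zero, integral_const, measure_univ,
      ENNReal.toReal_one, probReal_univ, smul_eq_mul, mul_one]
    exact Real.one_le_exp (by positivity)
  · set d := b - a with hd
    have hdpos : 0 < d := by simp [hd]; linarith
    set a' := a - M with ha'
    set b' := b - M with hb'
    set p := -a' / d with hp
    have hp0 : 0 ≤ p := by
      apply div_nonneg _ hdpos.le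
      simp [ha']; linarith
    have hp1 : p ≤ 1 := by
      rw [hp, div_le_one hdpos]
      simp [ha', hd]; linarith
    set h := l * d with hh
    -- pointwise bound
    have hpt : ∀ x, Real.exp (l * (f x - M)) ≤
        (b' - (f x - M))/d * Real.exp (l*a') + ((f x - M) - a')/d * Real.exp (l*b') := by
      intro x
      set z := f x - M with hz
      have hz1 : a' ≤ z := sub_le_sub_right (hab x).1 M
      have hz2 : z ≤ b' := sub_le_sub_right (hab x).2 M
      have hθ : (b' - z)/d + (z - a')/d = 1 := by
        rw [← add_div, div_eq_one_iff_eq hdpos.ne', ha', hb', hd]; ring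
      have hcv := convexOn_exp.2 (Set.mem_univ (l*a')) (Set.mem_univ (l*b'))
        (div_nonneg (by linarith) hdpos.le) (div_nonneg (by linarith) hdpos.le) hθ
      have harg : (b' - z)/d * (l*a') + (z - a')/d * (l*b') = l * z := by
        have hba : b' - a' = d := by rw [ha', hb', hd]; ring
        rw [div_mul_eq_mul_div, div_mul_eq_mul_div, ← add_div,
          div_eq_iff hdpos.ne']
        linear_combination l * z * hba
      simpa [smul_eq_mul, harg] using hcv
    -- rewrite pointwise bound in affine form
    set e1 := Real.exp (l*a') with he1
    set e2 := Real.exp (l*b') with he2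
    set c0 := (b'*e1 - a'*e2)/d with hc0
    set c1 := (e2 - e1)/d with hc1
    have hpt' : ∀ x, Real.exp (l * (f x - M)) ≤ c0 + c1 * (f x - M) := by
      intro x
      refine le_trans (hpt x) (le_of_eq ?_)
      rw [hc0, hc1]
      field_simp
      ring
    -- integrate
    have hint1 : Integrable (fun x => Real.exp (l * (f x - M))) ν := by
      apply integrable_of_bdd ((hf.sub measurable_const).const_mul l).exp (C := Real.exp (abs l * d))
      intro x
      rw [abs_of_nonneg (Real.exp_pos _).le]
      apply Real.exp_le_exp.2
      have h1 : |f x - M| ≤ d := by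
        rw [abs_le]; constructor
        · rw [hd]; linarith [(hab x).1]
        · rw [hd]; linarith [(hab x).2]
      calc l * (f x - M) ≤ |l * (f x - M)| := le_abs_self _
        _ = abs l * |f x - M| := abs_mul _ _
        _ ≤ abs l * d := by nlinarith [abs_nonneg l]
    have hint2 : Integrable (fun x => c0 + c1 * (f x - M)) ν :=
      (integrable_const c0).add ((hfint.sub (integrable_const M)).const_mul c1)
    have hZ : ∫ x, (f x - M) ∂ν = 0 := by
      rw [integral_sub hfint (integrable_const M)]; simp [hM]
    have hineq : ∫ x, Real.exp (l * (f x - M)) ∂ν ≤ c0 := by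
      calc ∫ x, Real.exp (l * (f x - M)) ∂ν ≤ ∫ x, (c0 + c1 * (f x - M)) ∂ν :=
            integral_mono hint1 hint2 hpt'
        _ = c0 := by
            have hint3 : Integrable (fun x => c1 * (f x - M)) ν := by
              simpa using (hfint.sub (integrable_const M)).const_mul c1
            rw [integral_add (integrable_const c0) hint3, MeasureTheory.integral_const_mul, hZ]
            simp
    -- identify c0 with exp (phi p h)
    have ha'p : a' = -(p*d) := by rw [hp, neg_div, neg_mul, neg_neg, div_mul_cancel₀ _ hdpos.ne']
    have hb'p : b' = (1-p)*d := by
      have : b' = a' + d := by rw [ha', hb', hd]; ring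
      rw [this, ha'p]; ring
    have hc0' : c0 = Real.exp (phi p h) := by
      rw [hc0, he1, he2, ha'p, hb'p, phi]
      rw [Real.exp_add, Real.exp_log (den_pos hp0 hp1 h)]
      have h1 : l * -(p*d) = -p*h := by rw [hh]; ring
      have h2 : l * ((1-p)*d) = h - p*h := by rw [hh]; ring
      rw [h1, h2, Real.exp_sub]
      have hepos := Real.exp_pos (p*h)
      field_simp [Real.exp_neg]
      have hinv : Real.exp (-(p*h)) * Real.exp (p*h) = 1 := by rw [← Real.exp_add]; simp
      linear_combination (-(p * Real.exp h)) * hinv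
    have := le_trans hineq (le_of_eq hc0')
    calc ∫ x, Real.exp (l * (f x - M)) ∂ν ≤ Real.exp (phi p h) := this
      _ ≤ Real.exp (h^2/8) := Real.exp_le_exp.2 (phi_le hp0 hp1 h)
      _ = Real.exp (l^2 * d^2 / 8) := by rw [hh]; ring_nf

lemma nonempty_of_prob {α : Type*} [MeasurableSpace α] (ν : Measure α)
    [IsProbabilityMeasure ν] : Nonempty α := by
  by_contra h
  have : ν Set.univ = 0 := by
    rw [Set.univ_eq_empty_iff.2 (not_nonempty_iff.1 h)]; simp
  simp [measure_univ] at this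

lemma measurable_cons {S : Type*} [MeasurableSpace S] {m : ℕ} :
    Measurable (fun z : S × (Fin m → S) => (Fin.cons z.1 z.2 : Fin (m+1) → S)) := by
  rw [measurable_pi_iff]
  intro j
  refine Fin.cases ?_ ?_ j
  · simpa using measurable_fst
  · intro i
    simp only [Fin.cons_succ]
    exact (measurable_pi_apply i).comp measurable_snd

lemma osc_bound {S : Type*} : ∀ (m : ℕ) (F : (Fin m → S) → ℝ) (c : Fin m → ℝ),
    (∀ (k : Fin m) (x x' : Fin m → S), (∀ j, j ≠ k → x j = x' j) → F x - F x' ≤ c k) →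
    ∀ x y, F x - F y ≤ ∑ k, c k := by
  intro m
  induction m with
  | zero =>
    intro F c hbd x y
    have : x = y := funext fun j => j.elim0
    simp [this]
  | succ m ih =>
    intro F c hbd x y
    set x' : Fin (m+1) → S := Fin.cons (y 0) (Fin.tail x) with hx'
    have h1 : F x - F x' ≤ c 0 := by
      apply hbd 0
      intro j hj
      rcases Fin.eq_succ_of_ne_zero hj with ⟨i, rfl⟩
      simp [hx', Fin.tail]
    have h2 : F x' - F y ≤ ∑ j : Fin m, c j.succ := by
      have := ih (fun v => F (Fin.cons (y 0) v)) (fun j => c j.succ) ?_ (Fin.tail x) (Fin.tail y)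
      · simpa [hx', Fin.cons_self_tail] using this
      · intro k u u' hdiff
        apply hbd k.succ
        intro j
        refine Fin.cases ?_ ?_ j
        · intro _; simp
        · intro i hne
          simp only [Fin.cons_succ]
          exact hdiff i (fun h => hne (by rw [h]))
    calc F x - F y = (F x - F x') + (F x' - F y) := by ring
      _ ≤ c 0 + ∑ j : Fin m, c j.succ := add_le_add h1 h2
      _ = ∑ k, c k := (Fin.sum_univ_succ c).symm

lemma mgf_pi {S : Type*} [MeasurableSpace S] (m : ℕ) :
    ∀ (ν : Fin m → Measure S), (∀ k, IsProbabilityMeasure (ν k)) →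
    ∀ (F : (Fin m → S) → ℝ), Measurable F → ∀ (B : ℝ), (∀ x, |F x| ≤ B) →
    ∀ (c : Fin m → ℝ),
    (∀ (k : Fin m) (x x' : Fin m → S), (∀ j, j ≠ k → x j = x' j) → F x - F x' ≤ c k) →
    ∀ l : ℝ,
    ∫ x, Real.exp (l * (F x - ∫ y, F y ∂(Measure.pi ν))) ∂(Measure.pi ν)
      ≤ Real.exp (l^2 * (∑ k, (c k)^2) / 8) := by
  induction m with
  | zero =>
    intro ν hν F hF B hB c hbd l
    haveI : ∀ k, IsProbabilityMeasure (ν k) := hν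
    have hconst : ∀ x : Fin 0 → S, F x = F (fun j => j.elim0) := by
      intro x; congr 1; funext j; exact j.elim0
    have h0 : (∫ y, F y ∂(Measure.pi ν)) = F (fun j => j.elim0) := by
      simp only [hconst]
      simp
    simp only [hconst, h0, sub_self, mul_zero, Real.exp_zero]
    simp
  | succ m ih =>
    intro ν hν F hF B hB c hbd l
    haveI : ∀ k, IsProbabilityMeasure (ν k) := hν
    haveI : Nonempty S := nonempty_of_prob (ν 0)
    obtain ⟨s₀⟩ := (inferInstance : Nonempty S)
    set ν' : Fin m → Measure S := fun j => ν j.succ with hν'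
    haveI : ∀ j, IsProbabilityMeasure (ν' j) := fun j => hν j.succ
    set P : Measure (Fin m → S) := Measure.pi ν' with hP
    set e := MeasurableEquiv.piFinSuccAbove (fun _ : Fin (m+1) => S) 0 with he
    have hmp := measurePreserving_piFinSuccAbove (fun k => ν k) 0
    have hsa : (fun j : Fin m => ν ((0 : Fin (m+1)).succAbove j)) = ν' := by
      funext j; rw [Fin.zero_succAbove]
    rw [hsa] at hmp
    have hesymm : ∀ z : S × (Fin m → S), e.symm z = Fin.cons z.1 z.2 := by
      intro z
      show (MeasurableEquiv.piFinSuccAbove (fun _ : Fin (m+1) => S) 0).symm z = _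
      simp [MeasurableEquiv.piFinSuccAbove, Fin.insertNthEquiv, Fin.insertNth_zero']
    have htrans : ∀ H : (Fin (m+1) → S) → ℝ,
        ∫ x, H x ∂(Measure.pi ν) = ∫ z, H (Fin.cons z.1 z.2) ∂((ν 0).prod P) := by
      intro H
      rw [← (hmp.symm e).integral_comp e.symm.measurableEmbedding H]
      congr 1
      funext z
      rw [hesymm z]
    set EF := ∫ y, F y ∂(Measure.pi ν) with hEF
    have hconsm : Measurable (fun z : S × (Fin m → S) => F (Fin.cons z.1 z.2)) :=
      hF.comp measurable_cons
    set G : (Fin m → S) → ℝ := fun y => ∫ s, F (Fin.cons s y) ∂(ν 0) with hG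
    have hGmeas : Measurable G :=
      (hconsm.stronglyMeasurable.integral_prod_left' (μ := ν 0)).measurable
    have hGbd : ∀ y, |G y| ≤ B := by
      intro y
      have := norm_integral_le_of_norm_le_const (μ := ν 0)
        (f := fun s => F (Fin.cons s y)) (C := B)
        (Filter.Eventually.of_forall (fun s => by simpa using hB (Fin.cons s y)))
      simpa [hG] using this
    have hHint : Integrable (fun z : S × (Fin m → S) => F (Fin.cons z.1 z.2)) ((ν 0).prod P) :=
      integrable_of_bdd hconsm (fun z => hB _)
    have hGint : EF = ∫ y, G y ∂P := by
      rw [hEF, htrans F, integral_prod_symm _ hHint]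
    -- bounded differences for G
    have hf0m : ∀ y : Fin m → S, Measurable (fun s => F (Fin.cons s y)) := fun y =>
      hconsm.comp (measurable_id.prodMk measurable_const)
    have hf0int : ∀ y, Integrable (fun s => F (Fin.cons s y)) (ν 0) := fun y =>
      integrable_of_bdd (hf0m y) (fun s => hB _)
    have hGbdiff : ∀ (k : Fin m) (y y' : Fin m → S), (∀ j, j ≠ k → y j = y' j) →
        G y - G y' ≤ c k.succ := by
      intro k y y' hdiff
      have hpt : ∀ s, F (Fin.cons s y) - F (Fin.cons s y') ≤ c k.succ := by
        intro s
        apply hbd k.succ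
        intro j
        refine Fin.cases ?_ ?_ j
        · intro _; simp
        · intro i hne
          simp only [Fin.cons_succ]
          exact hdiff i (fun h => hne (by rw [h]))
      have : G y - G y' = ∫ s, (F (Fin.cons s y) - F (Fin.cons s y')) ∂(ν 0) := by
        rw [integral_sub (hf0int y) (hf0int y')]
      rw [this]
      calc ∫ s, (F (Fin.cons s y) - F (Fin.cons s y')) ∂(ν 0)
          ≤ ∫ _, c k.succ ∂(ν 0) :=
            integral_mono ((hf0int y).sub (hf0int y')) (integrable_const _) hpt
        _ = c k.succ := by simp
    -- inner Hoeffding bound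
    have hinner : ∀ y, ∫ s, Real.exp (l * (F (Fin.cons s y) - EF)) ∂(ν 0)
        ≤ Real.exp (l^2 * (c 0)^2/8) * Real.exp (l * (G y - EF)) := by
      intro y
      have hosc : ∀ s s', F (Fin.cons s y) - F (Fin.cons s' y) ≤ c 0 := by
        intro s s'
        apply hbd 0
        intro j hj
        rcases Fin.eq_succ_of_ne_zero hj with ⟨i, rfl⟩
        simp
      have hbdd : BddBelow (Set.range fun s => F (Fin.cons s y)) := by
        refine ⟨F (Fin.cons s₀ y) - c 0, ?_⟩
        rintro _ ⟨s, rfl⟩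
        have := hosc s₀ s
        linarith
      set ia := ⨅ s, F (Fin.cons s y) with hia
      have hle1 : ∀ s, ia ≤ F (Fin.cons s y) := fun s => ciInf_le hbdd s
      have hle2 : ∀ s, F (Fin.cons s y) ≤ ia + c 0 := by
        intro s
        have h1 : F (Fin.cons s y) - c 0 ≤ ia :=
          le_ciInf (fun s' => by have := hosc s s'; linarith)
        linarith
      have hh := hoeffding_lemma (ν 0) (fun s => F (Fin.cons s y)) (hf0m y)
        ia (ia + c 0) (fun s => ⟨hle1 s, hle2 s⟩) l
      have hGy : (∫ s, F (Fin.cons s y) ∂(ν 0)) = G y := rfl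
      rw [hGy] at hh
      have hfact : ∀ s, Real.exp (l * (F (Fin.cons s y) - EF)) =
          Real.exp (l * (G y - EF)) * Real.exp (l * (F (Fin.cons s y) - G y)) := by
        intro s; rw [← Real.exp_add]; ring_nf
      calc ∫ s, Real.exp (l * (F (Fin.cons s y) - EF)) ∂(ν 0)
          = Real.exp (l * (G y - EF)) * ∫ s, Real.exp (l * (F (Fin.cons s y) - G y)) ∂(ν 0) := by
            simp only [hfact]; rw [integral_const_mul]
        _ ≤ Real.exp (l * (G y - EF)) * Real.exp (l^2 * (c 0)^2/8) := by
            apply mul_le_mul_of_nonneg_left _ (Real.exp_pos _).le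
            have harith : (ia + c 0 - ia) = c 0 := by ring
            calc ∫ s, Real.exp (l * (F (Fin.cons s y) - G y)) ∂(ν 0)
                ≤ Real.exp (l^2 * (ia + c 0 - ia)^2/8) := hh
              _ = Real.exp (l^2 * (c 0)^2/8) := by rw [harith]
        _ = Real.exp (l^2 * (c 0)^2/8) * Real.exp (l * (G y - EF)) := by ring
    -- outer IH
    have houter := ih ν' (fun j => hν j.succ) G hGmeas B hGbd (fun j => c j.succ) hGbdiff l
    rw [← hP] at houter
    rw [← hGint] at houter
    -- combine
    have hHm : Measurable (fun z : S × (Fin m → S) =>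
        Real.exp (l * (F (Fin.cons z.1 z.2) - EF))) :=
      ((hconsm.sub measurable_const).const_mul l).exp
    have hHbd : ∀ z : S × (Fin m → S),
        |Real.exp (l * (F (Fin.cons z.1 z.2) - EF))| ≤ Real.exp (|l| * (B + |EF|)) := by
      intro z
      rw [abs_of_nonneg (Real.exp_pos _).le]
      apply Real.exp_le_exp.2
      calc l * (F (Fin.cons z.1 z.2) - EF) ≤ |l * (F (Fin.cons z.1 z.2) - EF)| := le_abs_self _
        _ = |l| * |F (Fin.cons z.1 z.2) - EF| := abs_mul _ _
        _ ≤ |l| * (B + |EF|) := by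
            apply mul_le_mul_of_nonneg_left _ (abs_nonneg l)
            calc |F (Fin.cons z.1 z.2) - EF| ≤ |F (Fin.cons z.1 z.2)| + |EF| := abs_sub _ _
              _ ≤ B + |EF| := add_le_add (hB _) le_rfl
    have hHint2 : Integrable (fun z : S × (Fin m → S) =>
        Real.exp (l * (F (Fin.cons z.1 z.2) - EF))) ((ν 0).prod P) :=
      integrable_of_bdd hHm hHbd
    have hint1 : Integrable (fun y => ∫ s, Real.exp (l * (F (Fin.cons s y) - EF)) ∂(ν 0)) P :=
      hHint2.integral_prod_right
    have hint2 : Integrable (fun y =>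
        Real.exp (l^2 * (c 0)^2/8) * Real.exp (l * (G y - EF))) P := by
      apply Integrable.const_mul
      apply integrable_of_bdd ((hGmeas.sub measurable_const).const_mul l).exp
        (C := Real.exp (|l| * (B + |EF|)))
      intro y
      rw [abs_of_nonneg (Real.exp_pos _).le]
      apply Real.exp_le_exp.2
      calc l * (G y - EF) ≤ |l * (G y - EF)| := le_abs_self _
        _ = |l| * |G y - EF| := abs_mul _ _
        _ ≤ |l| * (B + |EF|) := by
            apply mul_le_mul_of_nonneg_left _ (abs_nonneg l)
            calc |G y - EF| ≤ |G y| + |EF| := abs_sub _ _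
              _ ≤ B + |EF| := add_le_add (hGbd _) le_rfl
    calc ∫ x, Real.exp (l * (F x - EF)) ∂(Measure.pi ν)
        = ∫ y, (∫ s, Real.exp (l * (F (Fin.cons s y) - EF)) ∂(ν 0)) ∂P := by
          rw [htrans (fun x => Real.exp (l * (F x - EF))),
            integral_prod_symm _ hHint2]
      _ ≤ ∫ y, Real.exp (l^2 * (c 0)^2/8) * Real.exp (l * (G y - EF)) ∂P :=
          integral_mono hint1 hint2 hinner
      _ = Real.exp (l^2 * (c 0)^2/8) * ∫ y, Real.exp (l * (G y - EF)) ∂P :=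
          integral_const_mul _ _
      _ ≤ Real.exp (l^2 * (c 0)^2/8) * Real.exp (l^2 * (∑ j : Fin m, (c j.succ)^2) / 8) :=
          mul_le_mul_of_nonneg_left houter (Real.exp_pos _).le
      _ = Real.exp (l^2 * (∑ k, (c k)^2) / 8) := by
          rw [← Real.exp_add, Fin.sum_univ_succ]
          ring_nf

lemma chernoff_pi {S : Type*} [MeasurableSpace S] {m : ℕ} (ν : Fin m → Measure S)
    (hν : ∀ k, IsProbabilityMeasure (ν k)) (F : (Fin m → S) → ℝ) (hF : Measurable F)
    (B : ℝ) (hB : ∀ x, |F x| ≤ B) (c : Fin m → ℝ)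
    (hbd : ∀ (k : Fin m) (x x' : Fin m → S), (∀ j, j ≠ k → x j = x' j) → F x - F x' ≤ c k)
    (t : ℝ) (ht : 0 ≤ t) (hC : 0 < ∑ k, (c k)^2) :
    ((Measure.pi ν) {x | t ≤ F x - ∫ y, F y ∂(Measure.pi ν)}).toReal
      ≤ Real.exp (-2 * t^2 / ∑ k, (c k)^2) := by
  haveI : ∀ k, IsProbabilityMeasure (ν k) := hν
  set Pm := Measure.pi ν with hPm
  haveI : IsProbabilityMeasure Pm := by rw [hPm]; infer_instance
  set C := ∑ k, (c k)^2 with hCdef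
  set l := 4 * t / C with hl
  have hl0 : 0 ≤ l := by positivity
  set EF := ∫ y, F y ∂Pm with hEF
  set g : (Fin m → S) → ℝ := fun x => F x - EF with hg
  have hgm : Measurable g := hF.sub measurable_const
  have hint : Integrable (fun x => Real.exp (l * g x)) Pm := by
    apply integrable_of_bdd ((hgm.const_mul l).exp) (C := Real.exp (l * (B + |EF|)))
    intro x
    rw [abs_of_nonneg (Real.exp_pos _).le]
    apply Real.exp_le_exp.2
    have : |g x| ≤ B + |EF| := by
      calc |g x| ≤ |F x| + |EF| := abs_sub _ _
        _ ≤ B + |EF| := add_le_add (hB x) le_rfl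
    calc l * g x ≤ |l * g x| := le_abs_self _
      _ = l * |g x| := by rw [abs_mul, abs_of_nonneg hl0]
      _ ≤ l * (B + |EF|) := mul_le_mul_of_nonneg_left this hl0
  have hcher := ProbabilityTheory.measure_ge_le_exp_mul_mgf (X := g) (μ := Pm) (t := l) t hl0 hint
  have hmgf : ProbabilityTheory.mgf g Pm l ≤ Real.exp (l^2 * C / 8) := by
    have := mgf_pi m ν hν F hF B hB c hbd l
    rw [← hPm, ← hEF] at this
    exact this
  calc (Pm {x | t ≤ g x}).toReal ≤ Real.exp (-l*t) * ProbabilityTheory.mgf g Pm l := hcher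
    _ ≤ Real.exp (-l*t) * Real.exp (l^2*C/8) :=
        mul_le_mul_of_nonneg_left hmgf (Real.exp_pos _).le
    _ = Real.exp (-l*t + l^2*C/8) := (Real.exp_add _ _).symm
    _ = Real.exp (-2*t^2/C) := by
        congr 1
        rw [hl]
        field_simp
        ring

theorem mcdiarmid_bounded_difference {Ω : Type*} [MeasurableSpace Ω]
    (μ : Measure Ω) [IsProbabilityMeasure μ]
    {S : Type*} [MeasurableSpace S] {m : ℕ} (X : Fin m → Ω → S)
    (hmeas : ∀ k, Measurable (X k))
    (hindep : ProbabilityTheory.iIndepFun X μ)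
    (F : (Fin m → S) → ℝ) (hF : Measurable F)
    (c : Fin m → ℝ) (hc : ∀ k, 0 < c k)
    (hbd : ∀ (k : Fin m) (x x' : Fin m → S),
      (∀ j, j ≠ k → x j = x' j) → |F x - F x'| ≤ c k)
    (t : ℝ) (ht : 0 ≤ t) :
    (μ {ω | t ≤ |F (fun k => X k ω) - ∫ ω', F (fun k => X k ω') ∂μ|}).toReal
      ≤ 2 * Real.exp (-2 * t ^ 2 / ∑ k, c k ^ 2) := by
  rcases Nat.eq_zero_or_pos m with hm | hm
  · -- m = 0 : RHS = 2, LHS ≤ 1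
    subst hm
    have hsum : (∑ k : Fin 0, c k ^ 2) = 0 := by simp
    rw [hsum]
    simp only [div_zero, Real.exp_zero, mul_one]
    have : (μ {ω | t ≤ |F (fun k => X k ω) - ∫ ω', F (fun k => X k ω') ∂μ|}) ≤ 1 := by
      rw [← measure_univ (μ := μ)]
      exact measure_mono (Set.subset_univ _)
    calc (μ _).toReal ≤ (1 : ENNReal).toReal := ENNReal.toReal_mono (by simp) this
      _ = 1 := by simp
      _ ≤ 2 := by norm_num
  · -- m ≥ 1
    set ν : Fin m → Measure S := fun k => μ.map (X k) with hν
    haveI hνP : ∀ k, IsProbabilityMeasure (ν k) := fun k =>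
      Measure.isProbabilityMeasure_map (hmeas k).aemeasurable
    set J : Ω → (Fin m → S) := fun ω k => X k ω with hJ
    have hJm : Measurable J := measurable_pi_iff.2 hmeas
    -- joint law is product measure
    have hmap : μ.map J = Measure.pi ν := by
      refine (Measure.pi_eq ?_).symm
      intro s hs
      rw [Measure.map_apply hJm (MeasurableSet.univ_pi hs)]
      have hpre : J ⁻¹' (Set.pi Set.univ s) = ⋂ k, X k ⁻¹' s k := by
        ext ω; simp [hJ, Set.mem_pi]
      rw [hpre]
      have hkey := hindep.measure_inter_preimage_eq_mul Finset.univ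
        (sets := s) (fun i _ => hs i)
      have : (⋂ i ∈ Finset.univ, X i ⁻¹' s i) = ⋂ k, X k ⁻¹' s k := by
        simp
      rw [this] at hkey
      rw [hkey]
      refine Finset.prod_congr rfl (fun k _ => ?_)
      rw [hν]
      rw [Measure.map_apply (hmeas k) (hs k)]
    set Pm := Measure.pi ν with hPm
    haveI : IsProbabilityMeasure Pm := by rw [hPm]; infer_instance
    -- expectation transfer
    have hE : ∫ ω', F (fun k => X k ω') ∂μ = ∫ x, F x ∂Pm := by
      rw [← hmap, integral_map hJm.aemeasurable hF.aestronglyMeasurable]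
    set EF := ∫ x, F x ∂Pm with hEF
    -- boundedness of F
    haveI : Nonempty S := nonempty_of_prob (ν ⟨0, hm⟩)
    obtain ⟨s₀⟩ := (inferInstance : Nonempty S)
    set x₀ : Fin m → S := fun _ => s₀ with hx₀
    have hbd1 : ∀ (k : Fin m) (x x' : Fin m → S),
        (∀ j, j ≠ k → x j = x' j) → F x - F x' ≤ c k := fun k x x' h =>
      le_trans (le_abs_self _) (hbd k x x' h)
    have hBB : ∀ x, |F x| ≤ |F x₀| + ∑ k, c k := by
      intro x
      have h1 : F x - F x₀ ≤ ∑ k, c k := osc_bound m F c hbd1 x x₀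
      have h2 : F x₀ - F x ≤ ∑ k, c k := osc_bound m F c hbd1 x₀ x
      have : |F x - F x₀| ≤ ∑ k, c k := abs_le.2 ⟨by linarith, h1⟩
      calc |F x| = |F x₀ + (F x - F x₀)| := by ring_nf
        _ ≤ |F x₀| + |F x - F x₀| := abs_add_le _ _
        _ ≤ |F x₀| + ∑ k, c k := add_le_add le_rfl this
    have hC : 0 < ∑ k, (c k)^2 := by
      apply Finset.sum_pos (fun k _ => pow_pos (hc k) 2)
      exact ⟨⟨0, hm⟩, Finset.mem_univ _⟩
    -- split into two events
    have hsplit : {x : Fin m → S | t ≤ |F x - EF|} ⊆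
        {x | t ≤ F x - EF} ∪ {x | t ≤ (-F) x - ∫ x, (-F) x ∂Pm} := by
      intro x hx
      simp only [Set.mem_setOf_eq, Set.mem_union, Pi.neg_apply]
      rw [integral_neg]
      rcases abs_cases (F x - EF) with ⟨heq, _⟩ | ⟨heq, _⟩
      · left; rw [← heq]; exact hx
      · right
        have : t ≤ -(F x - EF) := by rw [← heq]; exact hx
        linarith
    -- measure transfer
    have hset : {ω | t ≤ |F (fun k => X k ω) - ∫ ω', F (fun k => X k ω') ∂μ|} =
        J ⁻¹' {x | t ≤ |F x - EF|} := by
      ext ω; simp [hJ, hE, hEF]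
    have hmeasset : MeasurableSet {x : Fin m → S | t ≤ |F x - EF|} :=
      measurableSet_le measurable_const ((hF.sub measurable_const).abs)
    have htoReal : (μ {ω | t ≤ |F (fun k => X k ω) - ∫ ω', F (fun k => X k ω') ∂μ|}) =
        Pm {x | t ≤ |F x - EF|} := by
      rw [hset, ← hmap, Measure.map_apply hJm hmeasset]
    rw [htoReal]
    -- apply chernoff to F and -F
    have h1 := chernoff_pi ν hνP F hF (|F x₀| + ∑ k, c k) hBB c hbd1 t ht hC
    have h2 := chernoff_pi ν hνP (-F) hF.neg (|F x₀| + ∑ k, c k)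
      (fun x => by simpa using hBB x) c
      (fun k x x' h => by
        simp only [Pi.neg_apply, neg_sub_neg]
        exact le_trans (le_abs_self _) (by rw [abs_sub_comm]; exact hbd k x x' h)) t ht hC
    rw [← hPm, ← hEF] at h1
    rw [← hPm] at h2
    have hA1 : MeasurableSet {x : Fin m → S | t ≤ F x - EF} :=
      measurableSet_le measurable_const (hF.sub measurable_const)
    have hA2 : MeasurableSet {x : Fin m → S | t ≤ (-F) x - ∫ x, (-F) x ∂Pm} :=
      measurableSet_le measurable_const (hF.neg.sub measurable_const)
    have hsub : Pm {x | t ≤ |F x - EF|} ≤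
        Pm {x | t ≤ F x - EF} + Pm {x | t ≤ (-F) x - ∫ x, (-F) x ∂Pm} :=
      le_trans (measure_mono hsplit) (measure_union_le _ _)
    have hfin1 : Pm {x : Fin m → S | t ≤ F x - EF} ≠ ⊤ := measure_ne_top _ _
    have hfin2 : Pm {x : Fin m → S | t ≤ (-F) x - ∫ x, (-F) x ∂Pm} ≠ ⊤ := measure_ne_top _ _
    calc (Pm {x | t ≤ |F x - EF|}).toReal
        ≤ (Pm {x | t ≤ F x - EF} + Pm {x | t ≤ (-F) x - ∫ x, (-F) x ∂Pm}).toReal :=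
          ENNReal.toReal_mono (by simp [ENNReal.add_ne_top, hfin1, hfin2]) hsub
      _ = (Pm {x | t ≤ F x - EF}).toReal + (Pm {x | t ≤ (-F) x - ∫ x, (-F) x ∂Pm}).toReal :=
          ENNReal.toReal_add hfin1 hfin2
      _ ≤ Real.exp (-2*t^2 / ∑ k, (c k)^2) + Real.exp (-2*t^2 / ∑ k, (c k)^2) :=
          add_le_add h1 h2
      _ = 2 * Real.exp (-2 * t ^ 2 / ∑ k, c k ^ 2) := by ring
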